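/- arXiv:2501.16949 — 2 statements merged into one kernel-verified Lean document; each statement's English description precedes it below -/
import Mathlib

section
/- Let H be a separable Hilbert space, (g_j)_{j∈I} a Bessel sequence in H with bound β, A a bounded operator on H with 1 ∉ σ(A), W a closed subspace with orthogonal projection P_W, and K a finite set. Suppose there is a constant c > 0 such that for all x₀ ∈ H and w ∈ W, the states x_λ = A^{m(λ)} x₀ + (I − A^{m(λ)})(I − A)⁻¹ w (for suitable exponents m(λ) ≥ 0, λ ∈ K) satisfy ‖w‖² ≤ c Σ_{λ∈K} Σ_{j∈I} |⟨x_λ, g_j⟩|². Then, taking x₀ = (I − A)⁻¹ w, one obtains (1/(|K| c)) ‖w‖² ≤ Σ_{j∈I} |⟨w, P_W (I − A*)⁻¹ g_j⟩|² ≤ β ‖(I − A)⁻¹‖² ‖w‖² for all w ∈ W; hence (P_W (I − A*)⁻¹ g_j)_{j∈I} is a frame for W. -/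
open Filter

/-- If the source `w ∈ W` satisfies the stability estimate
`‖w‖² ≤ c ∑_{k ∈ K} ∑_j |⟨x_k, g j⟩|²` for the states
`x_k = A^(m k) x₀ + (I - A^(m k))(I - A)⁻¹ w` (all `x₀ ∈ H`, `w ∈ W`), then taking
`x₀ = (I - A)⁻¹ w` yields the frame inequalities
`(|K| c)⁻¹ ‖w‖² ≤ ∑_j |⟨w, P_W (I - A*)⁻¹ g j⟩|² ≤ β ‖(I - A)⁻¹‖² ‖w‖²` for all
`w ∈ W`, so `(P_W (I - A*)⁻¹ g j)_j` is a frame for `W`. -/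
theorem stmt16 {H : Type*} [NormedAddCommGroup H] [InnerProductSpace ℂ H]
    [CompleteSpace H] [TopologicalSpace.SeparableSpace H]
    {I : Type*} [Countable I] (g : I → H) (β : ℝ) (hβ : 0 < β)
    (hBessel : ∀ f : H, ∑' j, ‖(inner ℂ f (g j) : ℂ)‖ ^ 2 ≤ β * ‖f‖ ^ 2)
    (A : H →L[ℂ] H) (B : H →L[ℂ] H)
    (hB₁ : ((ContinuousLinearMap.id ℂ H) - A).comp B = ContinuousLinearMap.id ℂ H)
    (hB₂ : B.comp ((ContinuousLinearMap.id ℂ H) - A) = ContinuousLinearMap.id ℂ H)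
    (W : Submodule ℂ H) [CompleteSpace W]
    {K : Type*} [Fintype K] (m : K → ℕ) (c : ℝ) (hc : 0 < c)
    (hmain : ∀ (x₀ : H) (w : W),
      ‖(w : H)‖ ^ 2 ≤ c * ∑ k : K, ∑' j,
        ‖(inner ℂ ((A ^ m k) x₀ + (((ContinuousLinearMap.id ℂ H) - A ^ m k).comp B) w)
            (g j) : ℂ)‖ ^ 2) :
    ∀ w : W,
      ((Fintype.card K : ℝ) * c)⁻¹ * ‖w‖ ^ 2 ≤
          ∑' j, ‖(inner ℂ w ((W.orthogonalProjectionOnto)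
            (ContinuousLinearMap.adjoint B (g j))) : ℂ)‖ ^ 2 ∧
      ∑' j, ‖(inner ℂ w ((W.orthogonalProjectionOnto)
            (ContinuousLinearMap.adjoint B (g j))) : ℂ)‖ ^ 2 ≤
          β * ‖B‖ ^ 2 * ‖w‖ ^ 2 := by
  intro w
  -- The sum of interest equals ∑' j, ‖⟨B w, g j⟩‖²
  have hS : ∀ j : I, (inner ℂ w ((W.orthogonalProjectionOnto)
      (ContinuousLinearMap.adjoint B (g j))) : ℂ) = inner ℂ (B (w : H)) (g j) := by
    intro j
    rw [Submodule.inner_orthogonalProjectionOnto_eq_of_mem_left, ContinuousLinearMap.adjoint_inner_right]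
  have hSsum : ∑' j, ‖(inner ℂ w ((W.orthogonalProjectionOnto)
      (ContinuousLinearMap.adjoint B (g j))) : ℂ)‖ ^ 2
      = ∑' j, ‖(inner ℂ (B (w : H)) (g j) : ℂ)‖ ^ 2 := by
    exact tsum_congr fun j => by rw [hS j]
  have hstate : ∀ k : K, (A ^ m k) (B (w : H)) +
      (((ContinuousLinearMap.id ℂ H) - A ^ m k).comp B) (w : H) = B (w : H) := by
    intro k
    simp [ContinuousLinearMap.comp_apply, ContinuousLinearMap.sub_apply]
  have hlow := hmain (B (w : H)) w
  rw [Finset.sum_congr rfl (fun k _ => tsum_congr fun j => by rw [hstate k])] at hlow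
  rw [Finset.sum_const, Finset.card_univ, nsmul_eq_mul] at hlow
  set S := ∑' j, ‖(inner ℂ (B (w : H)) (g j) : ℂ)‖ ^ 2 with hSdef
  have hSnn : 0 ≤ S := tsum_nonneg fun j => by positivity
  constructor
  · rw [hSsum]
    rcases Nat.eq_zero_or_pos (Fintype.card K) with h0 | hpos
    · rw [h0]
      simp only [Nat.cast_zero, zero_mul, inv_zero, zero_mul]
      exact hSnn
    · have hcard : (0:ℝ) < Fintype.card K := by exact_mod_cast hpos
      calc ((Fintype.card K : ℝ) * c)⁻¹ * ‖w‖ ^ 2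
          ≤ ((Fintype.card K : ℝ) * c)⁻¹ * (c * ((Fintype.card K : ℝ) * S)) := by
            apply mul_le_mul_of_nonneg_left _ (by positivity)
            simpa using hlow
        _ = S := by field_simp
  · rw [hSsum]
    calc S ≤ β * ‖B (w : H)‖ ^ 2 := hBessel _
      _ ≤ β * (‖B‖ * ‖w‖) ^ 2 := by
          apply mul_le_mul_of_nonneg_left _ hβ.le
          exact pow_le_pow_left₀ (norm_nonneg _) (B.le_opNorm _) 2
      _ = β * ‖B‖ ^ 2 * ‖w‖ ^ 2 := by ring
end

section
/- Let N ∈ ℕ, N ≥ 1, and let r be an odd integer with 1 ≤ r ≤ 2N − 1 and gcd(r, N) = 1. Define Λ = {0, r/N} + 2ℤ ⊂ ℝ and Ω = [0, 1/2) ∪ [N/2, (N+1)/2) ⊂ ℝ. Then the family { |Ω|^{−1/2} e^{2πiλx} χ_Ω(x) : λ ∈ Λ } is an orthonormal system in L²(Ω); in particular, for distinct λ, μ ∈ Λ, ∫_Ω e^{2πi(λ−μ)x} dx = 0. -/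
open MeasureTheory

lemma exp_cont_int (a b : ℝ) (c : ℂ) :
    IntegrableOn (fun x : ℝ => Complex.exp (c * x)) (Set.Ico a b) :=
  ((Complex.continuous_exp.comp
    (continuous_const.mul Complex.continuous_ofReal)).integrableOn_Icc).mono_set
    Set.Ico_subset_Icc_self

lemma ico_int (a b : ℝ) (hab : a ≤ b) (c : ℂ) (hc : c ≠ 0) :
    ∫ x in Set.Ico a b, Complex.exp (c * x)
      = (Complex.exp (c * b) - Complex.exp (c * a)) / c := by
  rw [MeasureTheory.integral_Ico_eq_integral_Ioo, ← MeasureTheory.integral_Ioc_eq_integral_Ioo,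
    ← intervalIntegral.integral_of_le hab]
  exact integral_exp_mul_complex hc

lemma exp_odd_pi (z : ℤ) (hz : Odd z) :
    Complex.exp ((Real.pi : ℂ) * Complex.I * z) = -1 := by
  obtain ⟨t, ht⟩ := hz
  have : (Real.pi : ℂ) * Complex.I * z = t * (2 * Real.pi * Complex.I) + Real.pi * Complex.I := by
    rw [ht]; push_cast; ring
  rw [this, Complex.exp_add, Complex.exp_int_mul_two_pi_mul_I, Complex.exp_pi_mul_I]; ring

lemma exp_even_pi (z : ℤ) :
    Complex.exp ((Real.pi : ℂ) * Complex.I * (2 * z)) = 1 := by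
  have : (Real.pi : ℂ) * Complex.I * (2 * z) = z * (2 * Real.pi * Complex.I) := by push_cast; ring
  rw [this, Complex.exp_int_mul_two_pi_mul_I]

lemma key (N : ℕ) (hN : 1 ≤ N) (a : ℝ) (ha : a ≠ 0)
    (h : Complex.exp ((Real.pi : ℂ) * Complex.I * a) = 1 ∨
         Complex.exp ((Real.pi : ℂ) * Complex.I * a * N) = -1) :
    ∫ x in Set.Ico (0 : ℝ) (1 / 2) ∪ Set.Ico ((N : ℝ) / 2) (((N : ℝ) + 1) / 2),
      Complex.exp (2 * (Real.pi : ℂ) * Complex.I * (a : ℂ) * (x : ℂ)) = 0 := by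
  set c : ℂ := 2 * (Real.pi : ℂ) * Complex.I * (a : ℂ) with hc
  have hc0 : c ≠ 0 := by
    simp only [hc]
    refine mul_ne_zero (mul_ne_zero (mul_ne_zero two_ne_zero ?_) Complex.I_ne_zero) ?_
    · exact_mod_cast Real.pi_ne_zero
    · exact_mod_cast ha
  have hN1 : (1:ℝ)/2 ≤ (N:ℝ)/2 := by
    have : (1:ℝ) ≤ N := by exact_mod_cast hN
    linarith
  have hdisj : Disjoint (Set.Ico (0 : ℝ) (1 / 2)) (Set.Ico ((N : ℝ) / 2) (((N : ℝ) + 1) / 2)) :=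
    Set.Ico_disjoint_Ico.mpr (le_trans (min_le_left _ _) (le_trans hN1 (le_max_right _ _)))
  rw [MeasureTheory.setIntegral_union hdisj measurableSet_Ico (exp_cont_int _ _ c)
      (exp_cont_int _ _ c),
    ico_int _ _ (by norm_num) c hc0, ico_int _ _ (by linarith) c hc0]
  have e1 : c * ((1:ℝ)/2 : ℝ) = (Real.pi : ℂ) * Complex.I * a := by
    simp only [hc]; push_cast; ring
  have e2 : c * (((N:ℝ)+1)/2 : ℝ)
      = (Real.pi : ℂ) * Complex.I * a * N + (Real.pi : ℂ) * Complex.I * a := by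
    simp only [hc]; push_cast; ring
  have e3 : c * (((N:ℝ))/2 : ℝ) = (Real.pi : ℂ) * Complex.I * a * N := by
    simp only [hc]; push_cast; ring
  have e0 : c * ((0:ℝ) : ℂ) = 0 := by simp
  rw [e1, e2, e3, e0, Complex.exp_add, Complex.exp_zero]
  set A := Complex.exp ((Real.pi : ℂ) * Complex.I * a)
  set B := Complex.exp ((Real.pi : ℂ) * Complex.I * a * N)
  have comb : (A - 1) / c + (B * A - B) / c = (A - 1) * (1 + B) / c := by ring
  rw [comb]
  rcases h with h | h
  · rw [h]; simp
  · rw [h]; simp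

/-- For the spectral pair `(Ω, Λ)` with `Λ = {0, r/N} + 2ℤ` and
`Ω = [0, 1/2) ∪ [N/2, (N+1)/2)`, the exponentials `e^{2πiλx}`, `λ ∈ Λ`, form an
orthonormal system in `L²(Ω)`: each has norm one (`|Ω| = 1`), and for distinct
`λ, μ ∈ Λ` the integral `∫_Ω e^{2πi(λ-μ)x} dx` vanishes. -/
theorem stmt19 (N : ℕ) (hN : 1 ≤ N) (r : ℤ) (hodd : Odd r) (hr1 : 1 ≤ r)
    (hr2 : r ≤ 2 * (N : ℤ) - 1) (hcop : Int.gcd r N = 1) :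
    let Λ : Set ℝ := {x | ∃ n : ℤ, x = 2 * n ∨ x = (r : ℝ) / N + 2 * n}
    let Ω : Set ℝ := Set.Ico (0 : ℝ) (1 / 2) ∪ Set.Ico ((N : ℝ) / 2) (((N : ℝ) + 1) / 2)
    (∀ l ∈ Λ,
      (∫ x in Ω, ‖Complex.exp (2 * (Real.pi : ℂ) * Complex.I * (l : ℂ) * (x : ℂ))‖ ^ 2) = 1) ∧
    (∀ l ∈ Λ, ∀ m ∈ Λ, l ≠ m →
      (∫ x in Ω, Complex.exp (2 * (Real.pi : ℂ) * Complex.I * ((l : ℂ) - (m : ℂ)) * (x : ℂ))) = 0) := by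
  intro Λ Ω
  have hNR : (N : ℝ) ≠ 0 := Nat.cast_ne_zero.mpr (by omega)
  have hN1 : (1:ℝ)/2 ≤ (N:ℝ)/2 := by
    have : (1:ℝ) ≤ N := by exact_mod_cast hN
    linarith
  have hdisj : Disjoint (Set.Ico (0 : ℝ) (1 / 2)) (Set.Ico ((N : ℝ) / 2) (((N : ℝ) + 1) / 2)) :=
    Set.Ico_disjoint_Ico.mpr (le_trans (min_le_left _ _) (le_trans hN1 (le_max_right _ _)))
  constructor
  · intro l _
    have hnorm : ∀ x : ℝ,
        ‖Complex.exp (2 * (Real.pi : ℂ) * Complex.I * (l : ℂ) * (x : ℂ))‖ ^ 2 = 1 := by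
      intro x
      have : (2 * (Real.pi : ℂ) * Complex.I * (l : ℂ) * (x : ℂ))
          = ((2 * Real.pi * l * x : ℝ) : ℂ) * Complex.I := by push_cast; ring
      rw [this, Complex.norm_exp_ofReal_mul_I]
      norm_num
    simp_rw [hnorm]
    rw [MeasureTheory.setIntegral_const]
    have hvol : volume (Ω : Set ℝ) = 1 := by
      show volume (Set.Ico (0 : ℝ) (1 / 2) ∪ Set.Ico ((N : ℝ) / 2) (((N : ℝ) + 1) / 2)) = 1
      rw [measure_union hdisj measurableSet_Ico, Real.volume_Ico, Real.volume_Ico,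
        show ((N:ℝ)+1)/2 - (N:ℝ)/2 = 1/2 by ring, show (1:ℝ)/2 - 0 = 1/2 by ring,
        ← ENNReal.ofReal_add (by norm_num) (by norm_num)]
      norm_num
    rw [measureReal_def, hvol]
    simp
  · intro l hl m hm hne
    set a : ℝ := l - m with haa
    have hca : ((l : ℂ) - (m : ℂ)) = ((a : ℝ) : ℂ) := by push_cast [haa]; ring
    rw [hca]
    obtain ⟨n, hn⟩ := hl
    obtain ⟨k, hk⟩ := hm
    have hrodd := hodd
    rcases hn with hn | hn <;> rcases hk with hk | hk
    · -- both in 2ℤ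
      refine key N hN a ?_ (Or.inl ?_)
      · simp only [haa, hn, hk]
        intro h0
        apply hne
        have : (n : ℝ) = k := by linarith
        rw [hn, hk, show (n:ℝ) = (k:ℝ) from this]
      · have : (a : ℂ) = 2 * ((n - k : ℤ) : ℂ) := by
          simp only [haa, hn, hk]; push_cast; ring
        rw [this]
        exact exp_even_pi _
    · -- l = 2n, m = r/N + 2k : a = 2(n-k) - r/N
      refine key N hN a ?_ (Or.inr ?_)
      · simp only [haa, hn, hk]
        intro h0
        have hr' : (r : ℝ) = 2 * ((n - k : ℤ) : ℝ) * N := by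
          field_simp at h0
          push_cast
          linarith
        have : r = 2 * (n - k) * N := by exact_mod_cast hr'
        exact (Int.not_odd_iff_even.mpr ⟨(n - k) * N, by linarith⟩) hrodd
      · have hAN : (a : ℂ) * N = ((2 * (n - k) * N - r : ℤ) : ℂ) := by
          have : a * (N : ℝ) = ((2 * (n - k) * N - r : ℤ) : ℝ) := by
            simp only [haa, hn, hk]
            push_cast
            field_simp
            ring
          calc (a : ℂ) * N = ((a * N : ℝ) : ℂ) := by push_cast; ring
          _ = ((2 * (n - k) * N - r : ℤ) : ℂ) := by rw [this]; push_cast; ring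
        rw [mul_assoc, hAN]
        refine exp_odd_pi _ ?_
        obtain ⟨t, ht⟩ := hrodd
        exact ⟨(n - k) * N - t - 1, by rw [ht]; ring⟩
    · -- l = r/N + 2n, m = 2k : a = r/N + 2(n-k)
      refine key N hN a ?_ (Or.inr ?_)
      · simp only [haa, hn, hk]
        intro h0
        have hr' : (r : ℝ) = 2 * ((k - n : ℤ) : ℝ) * N := by
          field_simp at h0
          push_cast
          linarith
        have : r = 2 * (k - n) * N := by exact_mod_cast hr'
        exact (Int.not_odd_iff_even.mpr ⟨(k - n) * N, by linarith⟩) hrodd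
      · have hAN : (a : ℂ) * N = ((r + 2 * (n - k) * N : ℤ) : ℂ) := by
          have : a * (N : ℝ) = ((r + 2 * (n - k) * N : ℤ) : ℝ) := by
            simp only [haa, hn, hk]
            push_cast
            field_simp
            ring
          calc (a : ℂ) * N = ((a * N : ℝ) : ℂ) := by push_cast; ring
          _ = ((r + 2 * (n - k) * N : ℤ) : ℂ) := by rw [this]; push_cast; ring
        rw [mul_assoc, hAN]
        refine exp_odd_pi _ ?_
        obtain ⟨t, ht⟩ := hrodd
        exact ⟨t + (n - k) * N, by rw [ht]; ring⟩
    · -- both in r/N + 2ℤ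
      refine key N hN a ?_ (Or.inl ?_)
      · simp only [haa, hn, hk]
        intro h0
        apply hne
        have : (n : ℝ) = k := by linarith
        rw [hn, hk, show (n:ℝ) = (k:ℝ) from this]
      · have : (a : ℂ) = 2 * ((n - k : ℤ) : ℂ) := by
          simp only [haa, hn, hk]; push_cast; ring
        rw [this]
        exact exp_even_pi _
end
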